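/- Let s, t be real numbers with s ≠ 0, t ≠ 0 and s + t ≠ 0, and let m be an integer. Then, as ε → 0 through nonzero real values, the quantity (−1)^m · Γ(ε(s+t)) / (Γ(1 + εs + m) · Γ(εt − m)) tends to t/(s+t) if m ≥ 0, and to −s/(s+t) if m < 0. (This is the blow-up limit of the Fourier coefficients c_m(p,q) = (−1)^m Γ(p+q−1)/(Γ(p+m)Γ(q−m)) of the complementary-series kernel along the line p = 1 + εs, q = εt through the point (p,q) = (1,0).) -/

import Mathlib

open Filter Topology

private lemma gammaContAt (x : ℝ) (hx : 0 < x) : ContinuousAt Real.Gamma x := by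
  refine (Real.differentiableAt_Gamma fun j => ?_).continuousAt
  have : -(j:ℝ) ≤ 0 := neg_nonpos.mpr (Nat.cast_nonneg j)
  linarith

private lemma gammaTendsto (c : ℝ) (a : ℝ) (ha : 0 < a) :
    Tendsto (fun ε : ℝ => Real.Gamma (ε * c + a)) (𝓝[≠] (0:ℝ)) (𝓝 (Real.Gamma a)) := by
  have h1 : Tendsto (fun ε : ℝ => ε * c + a) (𝓝 (0:ℝ)) (𝓝 a) := by
    have hcont : Continuous (fun ε : ℝ => ε * c + a) := by continuity
    have := hcont.tendsto (0:ℝ)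
    simpa using this
  exact ((gammaContAt a ha).tendsto.comp h1).mono_left nhdsWithin_le_nhds

private lemma auxlim (c : ℝ) (hc : c ≠ 0) (n : ℕ) :
    Tendsto (fun ε : ℝ => ε * Real.Gamma (ε * c - n)) (𝓝[≠] (0:ℝ))
      (𝓝 ((-1)^n / (c * n.factorial))) := by
  induction n with
  | zero =>
      have heq : (fun ε : ℝ => Real.Gamma (ε * c + 1) / c) =ᶠ[𝓝[≠] (0:ℝ)]
          (fun ε : ℝ => ε * Real.Gamma (ε * c - (0:ℕ))) := by
        filter_upwards [self_mem_nhdsWithin] with ε (hε : ε ≠ 0)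
        have hεc : ε * c ≠ 0 := mul_ne_zero hε hc
        rw [Real.Gamma_add_one hεc]
        push_cast
        field_simp
        ring
      have := (gammaTendsto c 1 one_pos).div_const c
      have h2 := this.congr' heq
      simpa [Real.Gamma_one] using h2
  | succ n ih =>
      have hne : ∀ᶠ ε in 𝓝[≠] (0:ℝ), ε * c - ((n:ℝ)+1) ≠ 0 := by
        have hcont : Continuous (fun ε : ℝ => ε * c - ((n:ℝ)+1)) := by continuity
        have h1 : Tendsto (fun ε : ℝ => ε * c - ((n:ℝ)+1)) (𝓝[≠] (0:ℝ)) (𝓝 (-((n:ℝ)+1))) := by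
          have := hcont.tendsto (0:ℝ)
          simp only [zero_mul, zero_sub] at this
          exact this.mono_left nhdsWithin_le_nhds
        exact h1.eventually_ne (neg_ne_zero.mpr (by positivity))
      have heq : (fun ε : ℝ => (ε * Real.Gamma (ε * c - n)) / (ε * c - ((n:ℝ)+1)))
          =ᶠ[𝓝[≠] (0:ℝ)] (fun ε : ℝ => ε * Real.Gamma (ε * c - (n+1:ℕ))) := by
        filter_upwards [hne] with ε hε
        have : Real.Gamma (ε * c - n) = (ε * c - ((n:ℝ)+1)) * Real.Gamma (ε * c - ((n:ℝ)+1)) := by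
          have := Real.Gamma_add_one hε
          rw [show ε * c - ((n:ℝ)+1) + 1 = ε * c - n by ring] at this
          exact this
        rw [this]
        push_cast
        field_simp
      have hden : Tendsto (fun ε : ℝ => ε * c - ((n:ℝ)+1)) (𝓝[≠] (0:ℝ)) (𝓝 (-((n:ℝ)+1))) := by
        have hcont : Continuous (fun ε : ℝ => ε * c - ((n:ℝ)+1)) := by continuity
        have := hcont.tendsto (0:ℝ)
        simp only [zero_mul, zero_sub] at this
        exact this.mono_left nhdsWithin_le_nhds
      have hne' : (-((n:ℝ)+1)) ≠ 0 := neg_ne_zero.mpr (by positivity)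
      have h2 := (ih.div hden hne').congr' heq
      have key : ((-1:ℝ))^n / (c * (n.factorial:ℝ)) / (-((n:ℝ)+1))
          = (-1)^(n+1) / (c * ((n+1).factorial:ℝ)) := by
        have hf : ((n.factorial:ℝ)) ≠ 0 := Nat.cast_ne_zero.mpr (Nat.factorial_ne_zero n)
        have hn1 : ((n:ℝ)+1) ≠ 0 := by positivity
        rw [Nat.factorial_succ, pow_succ, div_div]
        push_cast
        rw [show c * (n.factorial:ℝ) * -((n:ℝ)+1) = -(c * (((n:ℝ)+1) * (n.factorial:ℝ))) by ring,
            div_neg]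
        ring
      rwa [key] at h2

theorem stmt_6 (s t : ℝ) (hs : s ≠ 0) (ht : t ≠ 0) (hst : s + t ≠ 0) (m : ℤ) :
    Tendsto
      (fun ε : ℝ =>
        (-1 : ℝ) ^ m * Real.Gamma (ε * (s + t)) /
          (Real.Gamma (1 + ε * s + m) * Real.Gamma (ε * t - m)))
      (𝓝[≠] (0 : ℝ))
      (𝓝 (if 0 ≤ m then t / (s + t) else -s / (s + t))) := by
  have hnum : Tendsto (fun ε : ℝ => ε * Real.Gamma (ε * (s + t))) (𝓝[≠] (0:ℝ))
      (𝓝 (1 / (s + t))) := by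
    have := auxlim (s+t) hst 0
    simpa using this
  rcases le_or_gt 0 m with hm | hm
  · obtain ⟨k, rfl⟩ := Int.eq_ofNat_of_zero_le hm
    rw [if_pos hm]
    have hA : Tendsto (fun ε : ℝ => Real.Gamma (1 + ε * s + (k:ℝ)))
        (𝓝[≠] (0:ℝ)) (𝓝 ((k:ℕ).factorial)) := by
      have h1 := gammaTendsto s (1 + (k:ℝ)) (by positivity)
      have : Real.Gamma (1 + (k:ℝ)) = (k:ℕ).factorial := by
        rw [add_comm, Real.Gamma_nat_eq_factorial]
      rw [this] at h1
      refine h1.congr fun ε => ?_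
      ring_nf
    have hB := auxlim t ht k
    have hden : Tendsto (fun ε : ℝ => Real.Gamma (1 + ε * s + (k:ℝ)) * (ε * Real.Gamma (ε * t - k)))
        (𝓝[≠] (0:ℝ)) (𝓝 ((k:ℕ).factorial * ((-1)^k / (t * (k:ℕ).factorial)))) := hA.mul hB
    have hdne : ((k:ℕ).factorial : ℝ) * ((-1)^k / (t * (k:ℕ).factorial)) ≠ 0 := by
      have h1 : ((k:ℕ).factorial : ℝ) ≠ 0 := Nat.cast_ne_zero.mpr (Nat.factorial_ne_zero k)
      have h2 : ((-1:ℝ))^k ≠ 0 := by positivity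
      field_simp
      exact div_ne_zero h2 ht
    have hmain := ((hnum.const_mul ((-1:ℝ)^k)).div hden hdne)
    have heq : (fun ε : ℝ => ((-1:ℝ)^k * (ε * Real.Gamma (ε * (s+t)))) /
          (Real.Gamma (1 + ε * s + (k:ℝ)) * (ε * Real.Gamma (ε * t - k))))
        =ᶠ[𝓝[≠] (0:ℝ)] (fun ε : ℝ =>
          (-1 : ℝ) ^ (k:ℤ) * Real.Gamma (ε * (s + t)) /
          (Real.Gamma (1 + ε * s + (k:ℤ)) * Real.Gamma (ε * t - (k:ℤ)))) := by
      filter_upwards [self_mem_nhdsWithin] with ε (hε : ε ≠ 0)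
      push_cast
      rw [zpow_natCast]
      rw [show Real.Gamma (1 + ε * s + (k:ℝ)) * (ε * Real.Gamma (ε * t - k))
            = ε * (Real.Gamma (1 + ε * s + (k:ℝ)) * Real.Gamma (ε * t - k)) by ring,
          show ((-1:ℝ)^k * (ε * Real.Gamma (ε * (s+t)))) = ε * ((-1:ℝ)^k * Real.Gamma (ε * (s+t))) by ring,
          mul_div_mul_left _ _ hε]
    have := hmain.congr' heq
    convert this using 2
    have h1 : ((k:ℕ).factorial : ℝ) ≠ 0 := Nat.cast_ne_zero.mpr (Nat.factorial_ne_zero k)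
    have h2 : ((-1:ℝ))^k ≠ 0 := by positivity
    field_simp
  · -- m < 0
    obtain ⟨n, rfl⟩ : ∃ n : ℕ, m = -((n:ℤ)+1) := by
      refine ⟨(-m-1).toNat, ?_⟩
      omega
    rw [if_neg (by omega)]
    have hA := auxlim s hs n
    have hB : Tendsto (fun ε : ℝ => Real.Gamma (ε * t + ((n:ℝ)+1)))
        (𝓝[≠] (0:ℝ)) (𝓝 ((n:ℕ).factorial)) := by
      have h1 := gammaTendsto t ((n:ℝ)+1) (by positivity)
      rwa [Real.Gamma_nat_eq_factorial] at h1
    have hden : Tendsto (fun ε : ℝ => (ε * Real.Gamma (ε * s - n)) * Real.Gamma (ε * t + ((n:ℝ)+1)))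
        (𝓝[≠] (0:ℝ)) (𝓝 (((-1)^n / (s * (n:ℕ).factorial)) * (n:ℕ).factorial)) := hA.mul hB
    have h1 : ((n:ℕ).factorial : ℝ) ≠ 0 := Nat.cast_ne_zero.mpr (Nat.factorial_ne_zero n)
    have h2 : ((-1:ℝ))^n ≠ 0 := by positivity
    have hdne : ((-1:ℝ)^n / (s * (n:ℕ).factorial)) * (n:ℕ).factorial ≠ 0 := by
      field_simp
      exact div_ne_zero h2 hs
    have hmain := (hnum.const_mul ((-1:ℝ)^(n+1))).div hden hdne
    have heq : (fun ε : ℝ => ((-1:ℝ)^(n+1) * (ε * Real.Gamma (ε * (s+t)))) /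
          ((ε * Real.Gamma (ε * s - n)) * Real.Gamma (ε * t + ((n:ℝ)+1))))
        =ᶠ[𝓝[≠] (0:ℝ)] (fun ε : ℝ =>
          (-1 : ℝ) ^ (-((n:ℤ)+1)) * Real.Gamma (ε * (s + t)) /
          (Real.Gamma (1 + ε * s + (-((n:ℤ)+1):ℤ)) * Real.Gamma (ε * t - (-((n:ℤ)+1):ℤ)))) := by
      filter_upwards [self_mem_nhdsWithin] with ε (hε : ε ≠ 0)
      have hz : ((-1:ℝ)) ^ (-((n:ℤ)+1)) = (-1:ℝ)^(n+1) := by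
        rw [zpow_neg, show ((n:ℤ)+1) = ((n+1 : ℕ) : ℤ) by push_cast; ring, zpow_natCast]
        rcases neg_one_pow_eq_one_iff_even (R := ℝ) (by norm_num) |>.symm with _
        rcases Nat.even_or_odd (n+1) with h | h
        · rw [h.neg_one_pow]; norm_num
        · rw [h.neg_one_pow]; norm_num
      rw [hz, show (1 + ε * s + (-((n:ℤ)+1):ℤ) : ℝ) = ε * s - n by push_cast; ring,
          show (ε * t - (-((n:ℤ)+1):ℤ) : ℝ) = ε * t + ((n:ℝ)+1) by push_cast; ring]
      rw [show (ε * Real.Gamma (ε * s - n)) * Real.Gamma (ε * t + ((n:ℝ)+1))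
            = ε * (Real.Gamma (ε * s - n) * Real.Gamma (ε * t + ((n:ℝ)+1))) by ring,
          show ((-1:ℝ)^(n+1) * (ε * Real.Gamma (ε * (s+t)))) = ε * ((-1:ℝ)^(n+1) * Real.Gamma (ε * (s+t))) by ring,
          mul_div_mul_left _ _ hε]
    have := hmain.congr' heq
    convert this using 2
    rw [pow_succ]
    field_simp
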